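/- Let r > 0, B_r = {z ∈ ℝⁿ : ‖z‖ < r}, and let f : [0,∞) × B_r → ℝⁿ be continuous with f(t,0) = 0 for all t ≥ 0 and continuously differentiable in z, and set A(t) = ∂f/∂z(t,0). Assume: (i) the linear time-varying system ẏ = A(t)·y is exponentially stable, i.e., there exist k ≥ 1 and γ > 0 such that every solution satisfies ‖y(t)‖ ≤ k·e^{−γ(t−t₀)}·‖y(t₀)‖ for all t ≥ t₀ ≥ 0; (ii) there exist L₁, L₂ > 0 such that ‖∂f/∂z(t,z)‖ ≤ L₁ and ‖∂f/∂z(t,z₁) − ∂f/∂z(t,z₂)‖ ≤ L₂·‖z₁ − z₂‖ for all t ≥ 0 and z, z₁, z₂ ∈ B_r. Then the origin is exponentially stable for ż = f(t,z): there exist δ > 0, C > 0 and λ > 0 such that every solution z : [0,∞) → B_r of ż(t) = f(t, z(t)) with ‖z(0)‖ < δ satisfies ‖z(t)‖ ≤ C·e^{−λt}·‖z(0)‖ for all t ≥ 0. -/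

import Mathlib

open Set Filter Topology


variable {E : Type*} [NormedAddCommGroup E] [NormedSpace ℝ E] [CompleteSpace E]

/-- Gluing helper. -/
lemma glue_hasDerivWithinAt {g Y : ℝ → E} {d : E} {s u w : Set ℝ} {t : ℝ}
    (hg : HasDerivWithinAt g d s t) (hw : w ∈ 𝓝[u] t) (hws : w ⊆ s)
    (he : Set.EqOn Y g w) (hYt : Y t = g t) :
    HasDerivWithinAt Y d u t := by
  have h1 : HasDerivWithinAt g d u t :=
    hg.mono_of_mem_nhdsWithin (Filter.mem_of_superset hw hws)
  exact h1.congr_of_eventuallyEq (Filter.eventuallyEq_of_mem hw he) hYt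

/-- Local existence, uniform step size, for globally Lipschitz vector fields
vanishing at the origin. -/
lemma local_exists (v : ℝ → E → E) (L : NNReal)
    (hlipv : ∀ t, LipschitzWith L (v t))
    (hzero : ∀ t, v t 0 = 0)
    (hcv : ∀ x, Continuous fun t => v t x)
    (s : ℝ) (x : E) :
    ∃ α : ℝ → E, α s = x ∧ ∀ t ∈ Icc (s - (1/(2*((L:ℝ)+1)))) (s + (1/(2*((L:ℝ)+1)))),
      HasDerivWithinAt α (v t (α t))
        (Icc (s - (1/(2*((L:ℝ)+1)))) (s + (1/(2*((L:ℝ)+1))))) t := by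
  set h : ℝ := 1/(2*((L:ℝ)+1)) with hh
  have hL0 : (0:ℝ) ≤ L := L.coe_nonneg
  have hpos : 0 < h := by positivity
  have hnorm : ∀ t y, ‖v t y‖ ≤ (L:ℝ) * ‖y‖ := by
    intro t y
    have := (hlipv t).dist_le_mul y 0
    simpa [hzero t, dist_eq_norm] using this
  have hpl : IsPicardLindelof v (tmin := s - h) (tmax := s + h)
      ⟨s, by constructor <;> linarith⟩ x ⟨‖x‖ + 1, by positivity⟩ 0
      ⟨(L:ℝ) * (2*‖x‖+1), by positivity⟩ L := by
    constructor
    · exact fun t _ => (hlipv t).lipschitzOnWith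
    · exact fun y _ => (hcv y).continuousOn
    · intro t _ y hy
      have h2 : ‖y‖ ≤ ‖y - x‖ + ‖x‖ := by
        simpa using norm_add_le (y - x) x
      have h1 : ‖y‖ ≤ ‖x‖ + (‖x‖ + 1) := by
        have := mem_closedBall_iff_norm.mp hy
        change ‖y - x‖ ≤ ‖x‖ + 1 at this
        linarith
      calc ‖v t y‖ ≤ (L:ℝ) * ‖y‖ := hnorm t y
        _ ≤ (L:ℝ) * (2*‖x‖+1) := by nlinarith
    · have hmax : max ((s+h) - s) (s - (s-h)) = h := by simp
      simp only [NNReal.coe_mk, NNReal.coe_zero, sub_zero]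
      rw [hmax, hh, mul_one_div, div_le_iff₀ (by positivity)]
      have hx0 : (0:ℝ) ≤ ‖x‖ := norm_nonneg x
      change (L:ℝ) * (2*‖x‖+1) ≤ (‖x‖+1) * (2*((L:ℝ)+1))
      nlinarith
  obtain ⟨α, hα0, hα⟩ := hpl.exists_eq_forall_mem_Icc_hasDerivWithinAt₀
  exact ⟨α, hα0, hα⟩

/-- Global existence of solutions for globally Lipschitz (uniformly in time),
time-continuous vector fields vanishing at the origin. -/
lemma global_exists (v : ℝ → E → E) (L : NNReal)
    (hlipv : ∀ t, LipschitzWith L (v t))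
    (hzero : ∀ t, v t 0 = 0)
    (hcv : ∀ x, Continuous fun t => v t x)
    (t₀ : ℝ) (x₀ : E) :
    ∃ y : ℝ → E, y t₀ = x₀ ∧ ∀ t, HasDerivAt y (v t (y t)) t := by
  set h : ℝ := 1/(2*((L:ℝ)+1)) with hh
  have hpos : 0 < h := by positivity
  -- finite-interval existence
  have FIN : ∀ m : ℕ, ∃ y : ℝ → E, y t₀ = x₀ ∧
      ∀ t ∈ Icc (t₀ - (m+1)*h) (t₀ + (m+1)*h),
        HasDerivWithinAt y (v t (y t)) (Icc (t₀ - (m+1)*h) (t₀ + (m+1)*h)) t := by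
    intro m
    induction m with
    | zero =>
      obtain ⟨α, hα0, hα⟩ := local_exists v L hlipv hzero hcv t₀ x₀
      rw [← hh] at hα
      refine ⟨α, hα0, ?_⟩
      simp only [Nat.cast_zero, zero_add, one_mul]
      exact hα
    | succ m ih =>
      obtain ⟨y, hy0, hy⟩ := ih
      set a : ℝ := t₀ - (m+1)*h with ha
      set b : ℝ := t₀ + (m+1)*h with hb
      have hm1 : (0:ℝ) < ((m:ℝ)+1)*h := by positivity
      have hab : a < b := by rw [ha, hb]; linarith
      obtain ⟨α, hα0, hα⟩ := local_exists v L hlipv hzero hcv b (y b)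
      obtain ⟨β, hβ0, hβ⟩ := local_exists v L hlipv hzero hcv a (y a)
      rw [← hh] at hα hβ
      set Y : ℝ → E := fun t => if t < a then β t else if t ≤ b then y t else α t with hYdef
      have hYy : EqOn Y y (Icc a b) := by
        intro t ht
        simp only [hYdef, if_neg (not_lt.mpr ht.1), if_pos ht.2]
      have hYα : EqOn Y α (Icc b (b+h)) := by
        intro t ht
        rcases eq_or_lt_of_le ht.1 with rfl | hbt
        · rw [hYy ⟨hab.le, le_rfl⟩, hα0]
        · simp only [hYdef, if_neg (not_lt.mpr (hab.le.trans hbt.le)),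
            if_neg (not_le.mpr hbt)]
      have hYβ : EqOn Y β (Icc (a-h) a) := by
        intro t ht
        rcases eq_or_lt_of_le ht.2 with rfl | hta
        · rw [hYy ⟨le_rfl, hab.le⟩, hβ0]
        · simp only [hYdef, if_pos hta]
      have hI : Icc (t₀ - ((m:ℝ)+1+1)*h) (t₀ + ((m:ℝ)+1+1)*h) = Icc (a-h) (b+h) := by
        rw [ha, hb]; ring_nf
      refine ⟨Y, ?_, ?_⟩
      · rw [hYy ⟨by rw [ha]; linarith, by rw [hb]; linarith⟩, hy0]
      · intro t ht
        push_cast at ht ⊢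
        rw [hI] at ht ⊢
        set u : Set ℝ := Icc (a-h) (b+h) with hu
        rcases lt_trichotomy t a with hta | rfl | hat
        · -- t < a : use β
          have hw : u ∩ Iio a ∈ 𝓝[u] t := inter_mem_nhdsWithin u (Iio_mem_nhds hta)
          have hws : u ∩ Iio a ⊆ Icc (a-h) (a+h) := by
            rintro x ⟨hx1, hx2⟩
            exact ⟨hx1.1, le_of_lt (lt_of_lt_of_le hx2 (by linarith))⟩
          have heq : EqOn Y β (u ∩ Iio a) := fun x hx => by
            simp only [hYdef, if_pos (mem_Iio.mp hx.2)]
          have hYt : Y t = β t := by simp only [hYdef, if_pos hta]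
          rw [hYt]
          exact glue_hasDerivWithinAt (hβ t (hws ⟨ht, hta⟩)) hw hws heq hYt
        · -- t = a : union
          have hYa : Y a = y a := hYy ⟨le_rfl, hab.le⟩
          have part1 : HasDerivWithinAt Y (v a (Y a)) (u ∩ Iic a) a := by
            have hws : u ∩ Iic a ⊆ Icc (a-h) (a+h) := by
              rintro x ⟨hx1, hx2⟩
              exact ⟨hx1.1, le_trans (mem_Iic.mp hx2) (by linarith)⟩
            have hYt : Y a = β a := by rw [hYa, hβ0]
            have heq : EqOn Y β (u ∩ Iic a) := fun x hx => hYβ ⟨hx.1.1, hx.2⟩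
            rw [hYt]
            exact glue_hasDerivWithinAt (hβ a ⟨by linarith, by linarith⟩)
              self_mem_nhdsWithin hws heq hYt
          have part2 : HasDerivWithinAt Y (v a (Y a)) (u ∩ Ici a) a := by
            have hw : (u ∩ Ici a) ∩ Iio b ∈ 𝓝[u ∩ Ici a] a :=
              inter_mem_nhdsWithin _ (Iio_mem_nhds hab)
            have hws : (u ∩ Ici a) ∩ Iio b ⊆ Icc a b :=
              fun x hx => ⟨hx.1.2, hx.2.le⟩
            have heq : EqOn Y y ((u ∩ Ici a) ∩ Iio b) := fun x hx => hYy (hws hx)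
            rw [hYa]
            exact glue_hasDerivWithinAt (hy a ⟨le_rfl, hab.le⟩) hw hws heq hYa
          have := part1.union part2
          rwa [← Set.inter_union_distrib_left, Set.Iic_union_Ici, Set.inter_univ] at this
        · rcases lt_trichotomy t b with htb | rfl | hbt
          · -- a < t < b : use y
            have hw : u ∩ Ioo a b ∈ 𝓝[u] t := inter_mem_nhdsWithin u (Ioo_mem_nhds hat htb)
            have hws : u ∩ Ioo a b ⊆ Icc a b := fun x hx => ⟨hx.2.1.le, hx.2.2.le⟩
            have heq : EqOn Y y (u ∩ Ioo a b) := fun x hx => hYy (hws hx)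
            have hYt : Y t = y t := hYy ⟨hat.le, htb.le⟩
            rw [hYt]
            exact glue_hasDerivWithinAt (hy t ⟨hat.le, htb.le⟩) hw hws heq hYt
          · -- t = b : union
            have hYb : Y b = y b := hYy ⟨hab.le, le_rfl⟩
            have part1 : HasDerivWithinAt Y (v b (Y b)) (u ∩ Iic b) b := by
              have hw : (u ∩ Iic b) ∩ Ioi a ∈ 𝓝[u ∩ Iic b] b :=
                inter_mem_nhdsWithin _ (Ioi_mem_nhds hab)
              have hws : (u ∩ Iic b) ∩ Ioi a ⊆ Icc a b :=
                fun x hx => ⟨hx.2.le, hx.1.2⟩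
              have heq : EqOn Y y ((u ∩ Iic b) ∩ Ioi a) := fun x hx => hYy (hws hx)
              rw [hYb]
              exact glue_hasDerivWithinAt (hy b ⟨hab.le, le_rfl⟩) hw hws heq hYb
            have part2 : HasDerivWithinAt Y (v b (Y b)) (u ∩ Ici b) b := by
              have hws : u ∩ Ici b ⊆ Icc (b-h) (b+h) := by
                rintro x ⟨hx1, hx2⟩
                exact ⟨le_trans (by linarith) (mem_Ici.mp hx2), hx1.2⟩
              have heq : EqOn Y α (u ∩ Ici b) := fun x hx => hYα ⟨hx.2, hx.1.2⟩
              have hYt : Y b = α b := by rw [hYb, hα0]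
              rw [hYt]
              exact glue_hasDerivWithinAt (hα b ⟨by linarith, by linarith⟩)
                self_mem_nhdsWithin hws heq hYt
            have := part1.union part2
            rwa [← Set.inter_union_distrib_left, Set.Iic_union_Ici, Set.inter_univ] at this
          · -- b < t : use α
            have hw : u ∩ Ioi b ∈ 𝓝[u] t := inter_mem_nhdsWithin u (Ioi_mem_nhds hbt)
            have hws : u ∩ Ioi b ⊆ Icc (b-h) (b+h) := by
              rintro x ⟨hx1, hx2⟩
              exact ⟨le_trans (by linarith) (mem_Ioi.mp hx2).le, hx1.2⟩
            have heq : EqOn Y α (u ∩ Ioi b) := fun x hx => by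
              simp only [hYdef, if_neg (not_lt.mpr (hab.le.trans (mem_Ioi.mp hx.2).le)),
                if_neg (not_le.mpr (mem_Ioi.mp hx.2))]
            have hYt : Y t = α t := by
              simp only [hYdef, if_neg (not_lt.mpr (hab.le.trans hbt.le)),
                if_neg (not_le.mpr hbt)]
            rw [hYt]
            exact glue_hasDerivWithinAt (hα t (hws ⟨ht, hbt⟩)) hw hws heq hYt
  -- choose solutions on each finite interval
  choose Y hY0 hY using FIN
  -- pairwise agreement
  have interval_mono : ∀ p q : ℕ, p ≤ q →
      Icc (t₀ - ((p:ℝ)+1)*h) (t₀ + ((p:ℝ)+1)*h) ⊆ Icc (t₀ - ((q:ℝ)+1)*h) (t₀ + ((q:ℝ)+1)*h) := by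
    intro p q hpq
    have hc : (p:ℝ) ≤ q := Nat.cast_le.mpr hpq
    apply Icc_subset_Icc <;> nlinarith
  have deriv_int : ∀ (p : ℕ) (t : ℝ), t ∈ Ioo (t₀ - ((p:ℝ)+1)*h) (t₀ + ((p:ℝ)+1)*h) →
      HasDerivAt (Y p) (v t (Y p t)) t := by
    intro p t ht
    exact (hY p t (Ioo_subset_Icc_self ht)).hasDerivAt (Icc_mem_nhds ht.1 ht.2)
  have agree : ∀ p q : ℕ, p ≤ q →
      EqOn (Y p) (Y q) (Icc (t₀ - ((p:ℝ)+1)*h) (t₀ + ((p:ℝ)+1)*h)) := by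
    intro p q hpq
    have hp1 : (0:ℝ) < ((p:ℝ)+1)*h := by positivity
    have hIoo : Ioo (t₀ - ((p:ℝ)+1)*h) (t₀ + ((p:ℝ)+1)*h) ⊆
        Ioo (t₀ - ((q:ℝ)+1)*h) (t₀ + ((q:ℝ)+1)*h) := by
      have hc : (p:ℝ) ≤ q := Nat.cast_le.mpr hpq
      apply Ioo_subset_Ioo <;> nlinarith
    apply ODE_solution_unique_of_mem_Icc
      (fun t _ => (hlipv t).lipschitzOnWith) (s := fun _ => (univ : Set E))
      (⟨by linarith, by linarith⟩ : t₀ ∈ Ioo (t₀ - ((p:ℝ)+1)*h) (t₀ + ((p:ℝ)+1)*h))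
    · exact fun t ht => (hY p t ht).continuousWithinAt
    · exact fun t ht => deriv_int p t ht
    · exact fun t _ => mem_univ _
    · exact fun t ht => ((hY q t ((interval_mono p q hpq) ht)).continuousWithinAt).mono
        (interval_mono p q hpq)
    · exact fun t ht => deriv_int q t (hIoo ht)
    · exact fun t _ => mem_univ _
    · rw [hY0 p, hY0 q]
  -- the global solution
  set μ : ℝ → ℕ := fun t => ⌈|t - t₀| / h⌉₊ with hμ
  have hμ1 : ∀ t, |t - t₀| ≤ ((μ t : ℝ)) * h := by
    intro t
    have h1 : |t - t₀| / h ≤ (μ t : ℝ) := Nat.le_ceil _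
    calc |t - t₀| = (|t - t₀| / h) * h := by field_simp
      _ ≤ (μ t : ℝ) * h := by nlinarith
  have hmem : ∀ (t : ℝ) (q : ℕ), μ t ≤ q →
      t ∈ Icc (t₀ - ((q:ℝ)+1)*h) (t₀ + ((q:ℝ)+1)*h) := by
    intro t q hq
    have h1 : |t - t₀| ≤ ((q:ℝ)+1) * h := by
      have := hμ1 t
      have hc : ((μ t : ℝ)) ≤ q := Nat.cast_le.mpr hq
      nlinarith
    rw [abs_le] at h1
    constructor <;> linarith [h1.1, h1.2]
  refine ⟨fun t => Y (μ t) t, ?_, ?_⟩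
  · have h0 : μ t₀ = 0 := by simp [hμ]
    simp only [h0, hY0]
  · intro t
    set M : ℕ := μ t + 1 with hM
    have hloc : ∀ t' ∈ Ioo (t - h) (t + h), Y (μ t') t' = Y M t' := by
      intro t' ht'
      have h1 : |t' - t₀| ≤ ((M:ℝ)) * h := by
        have h2 : |t' - t₀| ≤ |t - t₀| + h := by
          have : |t' - t₀| ≤ |t' - t| + |t - t₀| := abs_sub_le _ _ _
          have h3 : |t' - t| < h := by
            rw [abs_lt]; constructor <;> [linarith [ht'.1]; linarith [ht'.2]]
          linarith
        have := hμ1 t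
        have : ((μ t : ℝ)) * h + h = ((M:ℝ)) * h := by push_cast [hM]; ring
        nlinarith [hμ1 t]
      rcases le_total (μ t') M with hle | hle
      · exact agree (μ t') M hle (hmem t' (μ t') le_rfl)
      · exact (agree M (μ t') hle (by
          rcases abs_le.mp h1 with ⟨hl, hr⟩
          exact ⟨by linarith, by linarith⟩ : t' ∈ Icc (t₀ - ((M:ℝ)+1)*h) (t₀ + ((M:ℝ)+1)*h))).symm
    have hint : t ∈ Ioo (t₀ - ((M:ℝ)+1)*h) (t₀ + ((M:ℝ)+1)*h) := by
      have h1 : |t - t₀| ≤ ((μ t : ℝ)) * h := hμ1 t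
      have h2 : ((μ t : ℝ)) * h < ((M:ℝ)+1) * h := by
        have : ((μ t : ℝ)) < (M:ℝ)+1 := by push_cast [hM]; linarith
        nlinarith
      rcases abs_le.mp h1 with ⟨hl, hr⟩
      constructor <;> [linarith; linarith]
    have hDM : HasDerivAt (Y M) (v t (Y M t)) t := deriv_int M t hint
    have heq : (fun t' => Y (μ t') t') =ᶠ[𝓝 t] Y M := by
      filter_upwards [Ioo_mem_nhds (by linarith : t - h < t) (by linarith : t < t + h)]
        with t' ht' using hloc t' ht'
    have htt : Y (μ t) t = Y M t := hloc t ⟨by linarith, by linarith⟩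
    have final := hDM.congr_of_eventuallyEq heq
    simpa only [htt] using final


noncomputable section
set_option maxHeartbeats 1000000 in
/-- Theorem 3 (Khalil's Theorem 4.13, time-varying Lyapunov linearization):
if the Jacobian linearization `ẏ = A(t)y` at the origin of `ż = f(t,z)` is
exponentially stable and the Jacobian `∂f/∂z` is bounded and Lipschitz on
`B_r` uniformly in `t`, then the origin is (locally) exponentially stable
for the nonlinear system `ż = f(t,z)`. -/
theorem linearization_exponential_stability
    (n : ℕ) (r : ℝ) (hr : 0 < r)
    (f : ℝ → EuclideanSpace ℝ (Fin n) → EuclideanSpace ℝ (Fin n))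
    (Df : ℝ → EuclideanSpace ℝ (Fin n) →
      (EuclideanSpace ℝ (Fin n) →L[ℝ] EuclideanSpace ℝ (Fin n)))
    (hcont : ContinuousOn (fun p : ℝ × EuclideanSpace ℝ (Fin n) => f p.1 p.2)
      (Set.Ici (0:ℝ) ×ˢ Metric.ball 0 r))
    (hf0 : ∀ t, 0 ≤ t → f t 0 = 0)
    (hDf : ∀ t, 0 ≤ t → ∀ z ∈ Metric.ball (0 : EuclideanSpace ℝ (Fin n)) r,
      HasFDerivAt (f t) (Df t z) z)
    (hDfcont : ∀ t, 0 ≤ t →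
      ContinuousOn (Df t) (Metric.ball (0 : EuclideanSpace ℝ (Fin n)) r))
    -- (i) exponential stability of the linear time-varying system ẏ = A(t)y
    (k γ : ℝ) (hk : 1 ≤ k) (hγ : 0 < γ)
    (hlin : ∀ y : ℝ → EuclideanSpace ℝ (Fin n),
      (∀ t, 0 ≤ t → HasDerivAt y (Df t 0 (y t)) t) →
      ∀ t₀ t, 0 ≤ t₀ → t₀ ≤ t →
        ‖y t‖ ≤ k * Real.exp (-γ * (t - t₀)) * ‖y t₀‖)
    -- (ii) uniform boundedness and Lipschitz continuity of the Jacobian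
    (L₁ L₂ : ℝ) (hL₁ : 0 < L₁) (hL₂ : 0 < L₂)
    (hbdd : ∀ t, 0 ≤ t → ∀ z ∈ Metric.ball (0 : EuclideanSpace ℝ (Fin n)) r,
      ‖Df t z‖ ≤ L₁)
    (hlip : ∀ t, 0 ≤ t → ∀ z₁ ∈ Metric.ball (0 : EuclideanSpace ℝ (Fin n)) r,
      ∀ z₂ ∈ Metric.ball (0 : EuclideanSpace ℝ (Fin n)) r,
        ‖Df t z₁ - Df t z₂‖ ≤ L₂ * ‖z₁ - z₂‖) :
    ∃ δ > (0:ℝ), ∃ C > (0:ℝ), ∃ lam > (0:ℝ),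
      ∀ z : ℝ → EuclideanSpace ℝ (Fin n),
        (∀ t, 0 ≤ t → z t ∈ Metric.ball (0 : EuclideanSpace ℝ (Fin n)) r) →
        (∀ t, 0 ≤ t → HasDerivAt z (f t (z t)) t) →
        ‖z 0‖ < δ →
        ∀ t, 0 ≤ t → ‖z t‖ ≤ C * Real.exp (-lam * t) * ‖z 0‖ := by
  have hball0 : (0:EuclideanSpace ℝ (Fin n)) ∈ Metric.ball (0:EuclideanSpace ℝ (Fin n)) r :=
    Metric.mem_ball_self hr
  -- quadratic remainder estimate
  have F1 : ∀ t, 0 ≤ t → ∀ w ∈ Metric.ball (0:EuclideanSpace ℝ (Fin n)) r,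
      ‖f t w - Df t 0 w‖ ≤ L₂ * ‖w‖ * ‖w‖ := by
    intro t ht w hw
    have hwr : ‖w‖ < r := mem_ball_zero_iff.mp hw
    have hsub : Metric.closedBall (0:EuclideanSpace ℝ (Fin n)) ‖w‖ ⊆ Metric.ball (0:EuclideanSpace ℝ (Fin n)) r :=
      Metric.closedBall_subset_ball hwr
    have hder : ∀ u ∈ Metric.closedBall (0:EuclideanSpace ℝ (Fin n)) ‖w‖,
        HasFDerivWithinAt (fun u => f t u - Df t 0 u) (Df t u - Df t 0)
          (Metric.closedBall (0:EuclideanSpace ℝ (Fin n)) ‖w‖) u :=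
      fun u hu => ((hDf t ht u (hsub hu)).sub ((Df t 0).hasFDerivAt)).hasFDerivWithinAt
    have hbound : ∀ u ∈ Metric.closedBall (0:EuclideanSpace ℝ (Fin n)) ‖w‖,
        ‖Df t u - Df t 0‖ ≤ L₂ * ‖w‖ := by
      intro u hu
      have h1 : ‖Df t u - Df t 0‖ ≤ L₂ * ‖u - 0‖ := hlip t ht u (hsub hu) 0 hball0
      have h2 : ‖u‖ ≤ ‖w‖ := mem_closedBall_zero_iff.mp hu
      rw [sub_zero] at h1
      nlinarith [norm_nonneg u]
    have key := (convex_closedBall (0:EuclideanSpace ℝ (Fin n)) ‖w‖).norm_image_sub_le_of_norm_hasFDerivWithin_le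
      hder hbound (mem_closedBall_zero_iff.mpr le_rfl) (Metric.mem_closedBall_self (norm_nonneg w))
    have hg0 : f t 0 - Df t 0 0 = 0 := by rw [hf0 t ht, map_zero, sub_zero]
    rw [hg0, zero_sub, norm_neg, zero_sub, norm_neg] at key
    exact key
  -- Lipschitz estimate for f
  have F2 : ∀ t, 0 ≤ t → ∀ w ∈ Metric.ball (0:EuclideanSpace ℝ (Fin n)) r, ‖f t w‖ ≤ L₁ * ‖w‖ := by
    intro t ht w hw
    have hwr : ‖w‖ < r := mem_ball_zero_iff.mp hw
    have hsub : Metric.closedBall (0:EuclideanSpace ℝ (Fin n)) ‖w‖ ⊆ Metric.ball (0:EuclideanSpace ℝ (Fin n)) r :=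
      Metric.closedBall_subset_ball hwr
    have hder : ∀ u ∈ Metric.closedBall (0:EuclideanSpace ℝ (Fin n)) ‖w‖,
        HasFDerivWithinAt (f t) (Df t u)
          (Metric.closedBall (0:EuclideanSpace ℝ (Fin n)) ‖w‖) u :=
      fun u hu => (hDf t ht u (hsub hu)).hasFDerivWithinAt
    have key := (convex_closedBall (0:EuclideanSpace ℝ (Fin n)) ‖w‖).norm_image_sub_le_of_norm_hasFDerivWithin_le
      hder (fun u hu => hbdd t ht u (hsub hu))
      (mem_closedBall_zero_iff.mpr le_rfl) (Metric.mem_closedBall_self (norm_nonneg w))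
    rw [hf0 t ht, zero_sub, norm_neg, zero_sub, norm_neg] at key
    exact key
  -- continuity of t ↦ Df t 0 x on [0, ∞)
  have hGcont : ∀ x : EuclideanSpace ℝ (Fin n), ContinuousOn (fun s => Df s 0 x) (Ici (0:ℝ)) := by
    intro x
    rcases eq_or_ne x 0 with rfl | hx
    · simp only [map_zero]; exact continuousOn_const
    · have hx0 : 0 < ‖x‖ := norm_pos_iff.mpr hx
      set d : ℝ := r / (‖x‖ + 1) with hd
      have hd0 : 0 < d := by positivity
      set F : ℕ → ℝ → EuclideanSpace ℝ (Fin n) := fun j s => (d/((j:ℝ)+1))⁻¹ • f s ((d/((j:ℝ)+1)) • x) with hF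
      have hσ : ∀ j : ℕ, 0 < d/((j:ℝ)+1) := fun j => by positivity
      have hσd : ∀ j : ℕ, d/((j:ℝ)+1) ≤ d := fun j => by
        rw [div_le_iff₀ (by positivity)]; nlinarith [Nat.cast_nonneg (α := ℝ) j]
      have hmem : ∀ j : ℕ, (d/((j:ℝ)+1)) • x ∈ Metric.ball (0:EuclideanSpace ℝ (Fin n)) r := by
        intro j
        rw [mem_ball_zero_iff, norm_smul, Real.norm_eq_abs, abs_of_pos (hσ j)]
        have h1 : d/((j:ℝ)+1) * ‖x‖ ≤ d * ‖x‖ := by nlinarith [hσd j, hσ j]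
        have h2 : d * ‖x‖ < r := by
          rw [hd, div_mul_eq_mul_div, div_lt_iff₀ (by positivity)]
          nlinarith
        linarith
      have herr : ∀ j : ℕ, ∀ s ∈ Ici (0:ℝ),
          ‖Df s 0 x - F j s‖ ≤ (L₂ * d * (‖x‖*‖x‖))/((j:ℝ)+1) := by
        intro j s hs
        set σ : ℝ := d/((j:ℝ)+1) with hσdef
        have hσ0 : σ ≠ 0 := (hσ j).ne'
        have h1 := F1 s hs (σ • x) (hmem j)
        have hFjs : F j s = σ⁻¹ • f s (σ • x) := by
          simp only [hF, hσdef]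
        have hid : Df s 0 x - F j s = σ⁻¹ • (Df s 0 (σ • x) - f s (σ • x)) := by
          rw [hFjs]
          simp only [map_smul, smul_sub, inv_smul_smul₀ hσ0]
        rw [hid, norm_smul, norm_inv, Real.norm_eq_abs, abs_of_pos (hσ j), norm_sub_rev]
        have h2 : ‖σ • x‖ = σ * ‖x‖ := by
          rw [norm_smul, Real.norm_eq_abs, abs_of_pos (hσ j)]
        rw [h2] at h1
        have h3 : σ⁻¹ * (L₂ * (σ*‖x‖) * (σ*‖x‖)) = L₂ * σ * (‖x‖*‖x‖) := by
          field_simp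
        have h4 : σ⁻¹ * ‖f s (σ • x) - Df s 0 (σ • x)‖ ≤ σ⁻¹ * (L₂ * (σ*‖x‖) * (σ*‖x‖)) := by
          apply mul_le_mul_of_nonneg_left h1 (by positivity)
        rw [h3] at h4
        have h5 : L₂ * σ * (‖x‖*‖x‖) = (L₂ * d * (‖x‖*‖x‖))/((j:ℝ)+1) := by
          rw [hσdef]; ring
        rw [h5] at h4
        exact h4
      have hTU : TendstoUniformlyOn F (fun s => Df s 0 x) atTop (Ici (0:ℝ)) := by
        rw [Metric.tendstoUniformlyOn_iff]
        intro ε hε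
        set c : ℝ := L₂ * d * (‖x‖*‖x‖)
        have hc0 : Tendsto (fun j : ℕ => c/((j:ℝ)+1)) atTop (𝓝 0) := by
          have h1 := tendsto_const_div_atTop_nhds_zero_nat c
          have h2 : Tendsto (fun j : ℕ => c / (((j+1:ℕ)):ℝ)) atTop (𝓝 0) :=
            h1.comp (tendsto_add_atTop_nat 1)
          have h3 : (fun j : ℕ => c/((j:ℝ)+1)) = (fun j : ℕ => c / (((j+1:ℕ)):ℝ)) := by
            funext j; push_cast; ring
          rw [h3]
          exact h2
        filter_upwards [hc0.eventually (gt_mem_nhds hε)] with j hj s hs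
        have := herr j s hs
        rw [dist_eq_norm]
        exact lt_of_le_of_lt this hj
      have hFc : ∀ j : ℕ, ContinuousOn (F j) (Ici (0:ℝ)) := by
        intro j
        show ContinuousOn ((d/((j:ℝ)+1))⁻¹ • fun s => f s ((d/((j:ℝ)+1)) • x)) _
        apply ContinuousOn.const_smul
        have hmapsto : MapsTo (fun s : ℝ => (s, (d/((j:ℝ)+1)) • x))
            (Ici (0:ℝ)) (Ici (0:ℝ) ×ˢ Metric.ball (0:EuclideanSpace ℝ (Fin n)) r) :=
          fun s hs => ⟨hs, hmem j⟩
        have h2 := hcont.comp (Continuous.continuousOn (continuous_id.prodMk continuous_const)) hmapsto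
        exact h2
      exact hTU.continuousOn (Eventually.of_forall hFc).frequently
  -- the extended linear vector field
  have hAcont : ∀ x : EuclideanSpace ℝ (Fin n), Continuous fun t : ℝ => Df (max t 0) 0 x :=
    fun x => (hGcont x).comp_continuous (continuous_id.max continuous_const)
      (fun t => mem_Ici.mpr (le_max_right t 0))
  have hAlip : ∀ t : ℝ,
      LipschitzWith L₁.toNNReal (fun x : EuclideanSpace ℝ (Fin n) => Df (max t 0) 0 x) := by
    intro t
    apply LipschitzWith.of_dist_le_mul
    intro x y
    rw [dist_eq_norm, dist_eq_norm, ← map_sub]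
    have h1 : ‖Df (max t 0) 0 (x - y)‖ ≤ ‖Df (max t 0) 0‖ * ‖x - y‖ :=
      ContinuousLinearMap.le_opNorm _ _
    have h2 : ‖Df (max t 0) 0‖ ≤ L₁ := hbdd (max t 0) (le_max_right t 0) 0 hball0
    rw [Real.coe_toNNReal _ hL₁.le]
    nlinarith [norm_nonneg (x - y), norm_nonneg (Df (max t 0) 0)]
  have sol : ∀ (t₀ : ℝ) (x₀ : EuclideanSpace ℝ (Fin n)),
      ∃ y : ℝ → EuclideanSpace ℝ (Fin n), y t₀ = x₀ ∧
        ∀ t, HasDerivAt y (Df (max t 0) 0 (y t)) t :=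
    fun t₀ x₀ => global_exists (fun t x => Df (max t 0) 0 x) L₁.toNNReal hAlip
      (fun t => map_zero _) hAcont t₀ x₀
  -- the constants
  set T : ℝ := Real.log (4*k) / γ with hTdef
  have hT : 0 < T := div_pos (Real.log_pos (by linarith)) hγ
  have hkT : k * Real.exp (-γ * T) = 1/4 := by
    have h4k : (0:ℝ) < 4*k := by linarith
    have harg : -γ * T = -Real.log (4*k) := by
      rw [hTdef]; field_simp
    rw [harg, Real.exp_neg, Real.exp_log h4k]
    field_simp
  set E₀ : ℝ := Real.exp (L₁ * T) with hE₀def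
  have hE₀1 : 1 ≤ E₀ := Real.one_le_exp (by positivity)
  have hE₀0 : 0 < E₀ := by linarith
  set B : ℝ := (L₂/L₁) * E₀^3 with hBdef
  have hB : 0 < B := by positivity
  refine ⟨1/(4*B), by positivity, 2*E₀, by positivity, Real.log 2 / T,
    div_pos (Real.log_pos one_lt_two) hT, ?_⟩
  intro z hballz hz hz0
  -- growth estimate on intervals of length T
  have S : ∀ t₀, 0 ≤ t₀ → ∀ s ∈ Icc t₀ (t₀+T), ‖z s‖ ≤ ‖z t₀‖ * Real.exp (L₁*(s - t₀)) := by
    intro t₀ ht₀ s hs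
    have key := norm_le_gronwallBound_of_norm_deriv_right_le
      (f := z) (f' := fun s => f s (z s)) (δ := ‖z t₀‖) (K := L₁) (ε := 0) (a := t₀) (b := t₀+T)
      (fun u hu => ((hz u (le_trans ht₀ hu.1)).continuousAt).continuousWithinAt)
      (fun u hu => (hz u (le_trans ht₀ hu.1)).hasDerivWithinAt)
      le_rfl
      (fun u hu => by
        have := F2 u (le_trans ht₀ hu.1) (z u) (hballz u (le_trans ht₀ hu.1))
        linarith)
    have h2 := key s hs
    rwa [gronwallBound_ε0] at h2
  -- one-step decay estimate
  have D : ∀ t₀, 0 ≤ t₀ → ‖z (t₀+T)‖ ≤ (1/4) * ‖z t₀‖ + B * (‖z t₀‖ * ‖z t₀‖) := by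
    intro t₀ ht₀
    obtain ⟨y, hy0, hyd⟩ := sol t₀ (z t₀)
    have hy' : ∀ s, 0 ≤ s → HasDerivAt y (Df s 0 (y s)) s := by
      intro s hs
      have := hyd s
      rwa [max_eq_left hs] at this
    have hydecay : ‖y (t₀+T)‖ ≤ (1/4) * ‖z t₀‖ := by
      have h1 := hlin y hy' t₀ (t₀+T) ht₀ (by linarith)
      rw [hy0] at h1
      have h2 : t₀ + T - t₀ = T := by ring
      rw [h2, hkT] at h1
      linarith
    set ee : ℝ → EuclideanSpace ℝ (Fin n) := fun s => z s - y s with heedef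
    have key := norm_le_gronwallBound_of_norm_deriv_right_le
      (f := ee) (f' := fun s => f s (z s) - Df s 0 (y s)) (δ := 0) (K := L₁)
      (ε := L₂ * (‖z t₀‖ * E₀) * (‖z t₀‖ * E₀)) (a := t₀) (b := t₀+T)
      (fun u hu => (((hz u (le_trans ht₀ hu.1)).continuousAt).sub
        ((hyd u).continuousAt)).continuousWithinAt)
      (fun u hu => ((hz u (le_trans ht₀ hu.1)).sub
        (hy' u (le_trans ht₀ hu.1))).hasDerivWithinAt)
      (by simp [heedef, hy0])
      (fun u hu => by
        have hu0 : 0 ≤ u := le_trans ht₀ hu.1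
        have hzb := hballz u hu0
        have h1 := F1 u hu0 (z u) hzb
        have h2 : ‖Df u 0 (z u) - Df u 0 (y u)‖ ≤ L₁ * ‖ee u‖ := by
          rw [← map_sub]
          calc ‖Df u 0 (z u - y u)‖ ≤ ‖Df u 0‖ * ‖z u - y u‖ :=
                ContinuousLinearMap.le_opNorm _ _
            _ ≤ L₁ * ‖ee u‖ := by
                have := hbdd u hu0 0 hball0
                have hn : (0:ℝ) ≤ ‖z u - y u‖ := norm_nonneg _
                simp only [heedef]
                nlinarith [norm_nonneg (Df u 0)]
        have h3 : ‖z u‖ ≤ ‖z t₀‖ * E₀ := by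
          have hS := S t₀ ht₀ u ⟨hu.1, hu.2.le⟩
          have hexp : Real.exp (L₁*(u - t₀)) ≤ E₀ := by
            rw [hE₀def]
            apply Real.exp_le_exp.mpr
            nlinarith [hu.2, hu.1]
          nlinarith [norm_nonneg (z t₀), Real.exp_pos (L₁*(u - t₀))]
        have hsplit : f u (z u) - Df u 0 (y u) =
            (f u (z u) - Df u 0 (z u)) + (Df u 0 (z u) - Df u 0 (y u)) := by abel
        calc ‖f u (z u) - Df u 0 (y u)‖
            ≤ ‖f u (z u) - Df u 0 (z u)‖ + ‖Df u 0 (z u) - Df u 0 (y u)‖ := by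
              rw [hsplit]; exact norm_add_le _ _
          _ ≤ L₁ * ‖ee u‖ + L₂ * (‖z t₀‖ * E₀) * (‖z t₀‖ * E₀) := by
              have hprod : ‖z u‖ * ‖z u‖ ≤ (‖z t₀‖ * E₀) * (‖z t₀‖ * E₀) :=
                mul_le_mul h3 h3 (norm_nonneg _) (by positivity)
              nlinarith [norm_nonneg (z u), norm_nonneg (z t₀)])
    have h4 := key (t₀+T) ⟨by linarith, le_rfl⟩
    rw [gronwallBound_of_K_ne_0 hL₁.ne'] at h4
    have harg : t₀ + T - t₀ = T := by ring
    rw [harg] at h4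
    have h4' : ‖ee (t₀+T)‖ ≤ 0 * Real.exp (L₁*T) +
        L₂ * (‖z t₀‖ * E₀) * (‖z t₀‖ * E₀) / L₁ * (Real.exp (L₁*T) - 1) := h4
    have h5 : ‖ee (t₀+T)‖ ≤ B * (‖z t₀‖ * ‖z t₀‖) := by
      have hexp : Real.exp (L₁ * T) = E₀ := by rw [hE₀def]
      rw [hexp] at h4'
      have hkey : L₂ * (‖z t₀‖ * E₀) * (‖z t₀‖ * E₀) / L₁ * (E₀ - 1) ≤
          (L₂/L₁) * E₀^3 * (‖z t₀‖*‖z t₀‖) := by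
        have h1 : L₂ * (‖z t₀‖ * E₀) * (‖z t₀‖ * E₀) / L₁ * (E₀ - 1) =
            (L₂/L₁) * (‖z t₀‖*‖z t₀‖) * (E₀^2*(E₀-1)) := by ring
        have h2 : (L₂/L₁) * E₀^3 * (‖z t₀‖*‖z t₀‖) =
            (L₂/L₁) * (‖z t₀‖*‖z t₀‖) * E₀^3 := by ring
        rw [h1, h2]
        apply mul_le_mul_of_nonneg_left _ (by positivity)
        nlinarith [sq_nonneg E₀]
      rw [hBdef]
      linarith
    have htri : ‖z (t₀+T)‖ ≤ ‖y (t₀+T)‖ + ‖ee (t₀+T)‖ := by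
      have := norm_add_le (y (t₀+T)) (ee (t₀+T))
      simp only [heedef, add_sub_cancel] at this
      exact this
    linarith
  -- geometric decay along multiples of T
  have I : ∀ j : ℕ, ‖z ((j:ℝ)*T)‖ ≤ (1/2)^j * ‖z 0‖ := by
    intro j
    induction j with
    | zero => simp
    | succ j ih =>
      have htj : (0:ℝ) ≤ (j:ℝ)*T := by positivity
      have hD := D ((j:ℝ)*T) htj
      have hle : ‖z ((j:ℝ)*T)‖ ≤ ‖z 0‖ := by
        have hpow : ((1:ℝ)/2)^j ≤ 1 := pow_le_one₀ (by norm_num) (by norm_num)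
        nlinarith [norm_nonneg (z 0)]
      have hlt : ‖z ((j:ℝ)*T)‖ ≤ 1/(4*B) := le_trans hle hz0.le
      have hBzz : B * (‖z ((j:ℝ)*T)‖ * ‖z ((j:ℝ)*T)‖) ≤ (1/4) * ‖z ((j:ℝ)*T)‖ := by
        have hn : (0:ℝ) ≤ ‖z ((j:ℝ)*T)‖ := norm_nonneg _
        rw [le_div_iff₀ (by positivity : (0:ℝ) < 4*B)] at hlt
        nlinarith
      have hcast : ((j+1:ℕ):ℝ)*T = (j:ℝ)*T + T := by push_cast; ring
      rw [hcast]
      calc ‖z ((j:ℝ)*T + T)‖ ≤ (1/4)*‖z ((j:ℝ)*T)‖ + B*(‖z ((j:ℝ)*T)‖ * ‖z ((j:ℝ)*T)‖) := hD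
        _ ≤ (1/2)*‖z ((j:ℝ)*T)‖ := by linarith
        _ ≤ (1/2)*((1/2)^j*‖z 0‖) := by nlinarith
        _ = (1/2)^(j+1)*‖z 0‖ := by ring
  -- conclusion
  intro t ht
  set j : ℕ := ⌊t/T⌋₊ with hjdef
  have hj1 : (j:ℝ) ≤ t/T := Nat.floor_le (by positivity)
  have hj1' : (j:ℝ)*T ≤ t := by
    rw [← le_div_iff₀ hT]
    exact hj1
  have hj2 : t/T < (j:ℝ)+1 := Nat.lt_floor_add_one _
  have hj2' : t < ((j:ℝ)+1)*T := by
    rw [← div_lt_iff₀ hT] at *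
    linarith [hj2]
  have htj0 : (0:ℝ) ≤ (j:ℝ)*T := by positivity
  have htmem : t ∈ Icc ((j:ℝ)*T) ((j:ℝ)*T + T) := ⟨hj1', by nlinarith⟩
  have hS := S ((j:ℝ)*T) htj0 t htmem
  have hexp : Real.exp (L₁*(t - (j:ℝ)*T)) ≤ E₀ := by
    rw [hE₀def]
    apply Real.exp_le_exp.mpr
    nlinarith
  have hzt : ‖z t‖ ≤ E₀ * ((1/2)^j * ‖z 0‖) := by
    calc ‖z t‖ ≤ ‖z ((j:ℝ)*T)‖ * Real.exp (L₁*(t - (j:ℝ)*T)) := hS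
      _ ≤ ‖z ((j:ℝ)*T)‖ * E₀ := mul_le_mul_of_nonneg_left hexp (norm_nonneg _)
      _ ≤ ((1/2)^j * ‖z 0‖) * E₀ := mul_le_mul_of_nonneg_right (I j) hE₀0.le
      _ = E₀ * ((1/2)^j * ‖z 0‖) := by ring
  have hlog : 0 < Real.log 2 := Real.log_pos one_lt_two
  have hpowexp : ((1:ℝ)/2)^j = Real.exp ((j:ℝ) * (-Real.log 2)) := by
    have h1 : (1:ℝ)/2 = Real.exp (-Real.log 2) := by
      rw [Real.exp_neg, Real.exp_log two_pos, one_div]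
    rw [h1, ← Real.exp_nat_mul]
  have he2 : (j:ℝ) * (-Real.log 2) ≤ Real.log 2 + (-(Real.log 2 / T) * t) := by
    have hid : Real.log 2 / T * t = (t/T) * Real.log 2 := by
      field_simp
    have hj3 : t/T - 1 < (j:ℝ) := by linarith
    nlinarith
  have hpow2 : ((1:ℝ)/2)^j ≤ 2 * Real.exp (-(Real.log 2 / T) * t) := by
    rw [hpowexp]
    calc Real.exp ((j:ℝ) * (-Real.log 2)) ≤
        Real.exp (Real.log 2 + (-(Real.log 2 / T) * t)) := Real.exp_le_exp.mpr he2
      _ = 2 * Real.exp (-(Real.log 2 / T) * t) := by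
          rw [Real.exp_add, Real.exp_log two_pos]
  calc ‖z t‖ ≤ E₀ * ((1/2)^j * ‖z 0‖) := hzt
    _ ≤ E₀ * ((2 * Real.exp (-(Real.log 2 / T) * t)) * ‖z 0‖) := by
        apply mul_le_mul_of_nonneg_left _ hE₀0.le
        exact mul_le_mul_of_nonneg_right hpow2 (norm_nonneg _)
    _ = 2*E₀ * Real.exp (-(Real.log 2 / T) * t) * ‖z 0‖ := by ring


end
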